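/- For every integer n ≥ 2, the sum of double zeta values of even weight 2n satisfies ∑_{k=2}^{2n-1} ζ(k, 2n-k) = ζ(2n). -/

import Mathlib

/-- The Riemann zeta value `ζ(s) = ∑_{k>0} k^{-s}` for a natural number exponent. -/
noncomputable def zetaVal (s : ℕ) : ℝ := ∑' k : ℕ+, (1 : ℝ) / (k : ℝ) ^ s

/-- The double zeta value `ζ(s₁, s₂) = ∑_{k₁ > k₂ > 0} k₁^{-s₁} k₂^{-s₂}`. -/
noncomputable def doubleZeta (s₁ s₂ : ℕ) : ℝ :=
  ∑' p : {p : ℕ+ × ℕ+ // p.2 < p.1}, (1 : ℝ) / ((p.1.1 : ℝ) ^ s₁ * (p.1.2 : ℝ) ^ s₂)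

namespace EulerSumAux

open Finset Filter Topology

noncomputable def harm (c : ℕ) : ℝ := ∑ j ∈ Finset.range c, 1 / (j + 1 : ℝ)

lemma harm_succ (c : ℕ) : harm (c+1) = harm c + 1/(c+1) := Finset.sum_range_succ _ _

lemma harm_one : harm 1 = 1 := by simp [harm]

lemma harm_nonneg (c : ℕ) : 0 ≤ harm c :=
  Finset.sum_nonneg fun j _ => by positivity

lemma harm_le (c : ℕ) : harm c ≤ c := by
  calc harm c ≤ ∑ _j ∈ Finset.range c, (1:ℝ) := by
        apply Finset.sum_le_sum
        intro j _
        rw [div_le_one (by positivity)]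
        linarith [Nat.cast_nonneg (α := ℝ) j]
    _ = c := by simp

lemma tele_basic (c : ℝ) (hc : 0 ≤ c) :
    HasSum (fun d : ℕ => (1/(d+1+c) - 1/(d+2+c) : ℝ)) (1/(1+c)) := by
  have h0 : ∀ d : ℕ, (0:ℝ) ≤ 1/(d+1+c) - 1/(d+2+c) := by
    intro d
    have h1 : (0:ℝ) < d+1+c := by positivity
    have h2 : (0:ℝ) < d+2+c := by positivity
    have := one_div_le_one_div_of_le h1 (by linarith : (d:ℝ)+1+c ≤ d+2+c)
    linarith
  rw [hasSum_iff_tendsto_nat_of_nonneg h0]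
  have hps : ∀ n : ℕ, ∑ i ∈ Finset.range n, ((1:ℝ)/(i+1+c) - 1/(i+2+c))
      = 1/(1+c) - 1/(n+1+c) := by
    intro n
    have h := Finset.sum_range_sub' (fun i : ℕ => (1:ℝ)/(i+1+c)) n
    rw [show (1:ℝ)/(1+c) = 1/((0:ℕ)+1+c) by norm_num, ← h]
    apply Finset.sum_congr rfl
    intro i _
    push_cast
    ring_nf
  simp only [hps]
  have ht : Tendsto (fun n : ℕ => (1:ℝ)/(n+1+c)) atTop (𝓝 0) := by
    simp only [one_div]
    apply Filter.Tendsto.inv_tendsto_atTop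
    apply tendsto_atTop_add_const_right
    apply tendsto_atTop_add_const_right
    exact tendsto_natCast_atTop_atTop
  have h2 : Tendsto (fun n : ℕ => (1:ℝ)/(1+c) - 1/(n+1+c)) atTop (𝓝 (1/(1+c) - 0)) :=
    Tendsto.const_sub _ ht
  simpa using h2

lemma tele_shift (c : ℕ) :
    HasSum (fun d : ℕ => (1/(d+1) - 1/(d+1+c) : ℝ)) (harm c) := by
  have hpt : (fun d : ℕ => (1/(d+1) - 1/(d+1+c) : ℝ))
      = fun d : ℕ => ∑ j ∈ Finset.range c, ((1:ℝ)/(d+1+j) - 1/(d+2+j)) := by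
    funext d
    refine Eq.symm ?_
    refine (Finset.sum_congr rfl fun j _ => ?_).trans
      ((Finset.sum_range_sub' (fun j : ℕ => (1:ℝ)/(d+1+j)) c).trans ?_)
    · push_cast; ring_nf
    · push_cast; ring_nf
  rw [hpt, show harm c = ∑ j ∈ Finset.range c, (1:ℝ)/(1+j) from
    Finset.sum_congr rfl fun j _ => by rw [add_comm]]
  exact hasSum_sum fun j _ => tele_basic (j : ℝ) (Nat.cast_nonneg j)

lemma tele_pnat (l : ℕ+) :
    HasSum (fun d : ℕ+ => (1/((d:ℕ):ℝ) - 1/(((d:ℕ):ℝ)+((l:ℕ):ℝ)))) (harm l) := by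
  rw [← Equiv.hasSum_iff Equiv.pnatEquivNat.symm]
  have : ((fun d : ℕ+ => (1/((d:ℕ):ℝ) - 1/(((d:ℕ):ℝ)+((l:ℕ):ℝ)))) ∘ Equiv.pnatEquivNat.symm)
      = fun d : ℕ => (1/(d+1) - 1/(d+1+(l:ℕ)) : ℝ) := by
    funext d
    simp only [Function.comp]
    have : ((Equiv.pnatEquivNat.symm d : ℕ+) : ℕ) = d + 1 := rfl
    rw [this]
    push_cast
    ring_nf
  rw [this]
  exact tele_shift l

lemma geom_id : ∀ w : ℕ, 1 ≤ w → ∀ L D : ℝ, 0 < L → 0 < D →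
    ∑ k ∈ Finset.Icc 2 w, 1/((L+D)^k * L^(w+1-k))
      = 1/(L^w*D) - 1/(L^w*(L+D)) - 1/((L+D)^w*D) := by
  intro w hw
  induction w, hw using Nat.le_induction with
  | base =>
    intro L D hL hD
    rw [Finset.Icc_eq_empty (by omega)]
    have hM : (0:ℝ) < L + D := by linarith
    simp only [Finset.sum_empty, pow_one]
    field_simp
    ring
  | succ w hw ih =>
    intro L D hL hD
    have hM : (0:ℝ) < L + D := by linarith
    rw [Finset.sum_Icc_succ_top (by omega : 2 ≤ w+1)]
    have hcongr : ∑ k ∈ Finset.Icc 2 w, 1/((L+D)^k * L^(w+1+1-k))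
        = ∑ k ∈ Finset.Icc 2 w, (1/((L+D)^k * L^(w+1-k))) * (1/L) := by
      apply Finset.sum_congr rfl
      intro k hk
      have hk' := Finset.mem_Icc.mp hk
      rw [show w+1+1-k = (w+1-k)+1 by omega, pow_succ]
      rw [one_div_mul_one_div, mul_assoc]
    rw [hcongr, ← Finset.sum_mul, ih L D hL hD]
    rw [show w+1+1-(w+1) = 1 by omega, pow_one]
    have h1 : L ≠ 0 := ne_of_gt hL
    have h2 : D ≠ 0 := ne_of_gt hD
    have h3 : L + D ≠ 0 := ne_of_gt hM
    have h4 : L^w ≠ 0 := pow_ne_zero _ h1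
    have h5 : (L+D)^w ≠ 0 := pow_ne_zero _ h3
    rw [pow_succ, pow_succ]
    field_simp
    ring

lemma denom_F {L D : ℝ} (hL : 1 ≤ L) (hD : 1 ≤ D) (w k : ℕ) (h3 : 3 ≤ w) (hk2 : 2 ≤ k)
    (hkw : k ≤ w) : D^2*L^2 ≤ (L+D)^k * L^(w+1-k) := by
  have hL0 : (0:ℝ) < L := lt_of_lt_of_le one_pos hL
  have hD0 : (0:ℝ) < D := lt_of_lt_of_le one_pos hD
  have hM : (1:ℝ) ≤ L + D := by linarith
  calc D^2*L^2 ≤ (L+D)^2 * L^(w-1) := by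
        have e1 : D^2 ≤ (L+D)^2 := pow_le_pow_left₀ (le_of_lt hD0) (by linarith) 2
        have e2 : L^2 ≤ L^(w-1) := pow_le_pow_right₀ hL (by omega)
        exact mul_le_mul e1 e2 (by positivity) (by positivity)
    _ = (L+D)^2 * (L^(k-2) * L^(w+1-k)) := by
        have h : k - 2 + (w+1-k) = w - 1 := by omega
        rw [← pow_add, h]
    _ ≤ (L+D)^2 * ((L+D)^(k-2) * L^(w+1-k)) := by
        have e1 : L^(k-2) ≤ (L+D)^(k-2) := pow_le_pow_left₀ (le_of_lt hL0) (by linarith) _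
        exact mul_le_mul_of_nonneg_left
          (mul_le_mul_of_nonneg_right e1 (pow_pos hL0 _).le) (by positivity)
    _ = (L+D)^k * L^(w+1-k) := by
        have h : 2 + (k-2) = k := by omega
        rw [← mul_assoc, ← pow_add, h]

lemma denom_C {L D : ℝ} (hL : 1 ≤ L) (hD : 1 ≤ D) (w : ℕ) (h3 : 3 ≤ w) :
    D^2*L^2 ≤ L^(w-1) * D * (L+D) := by
  have hL0 : (0:ℝ) < L := lt_of_lt_of_le one_pos hL
  have hD0 : (0:ℝ) < D := lt_of_lt_of_le one_pos hD
  have e2 : L^2 ≤ L^(w-1) := pow_le_pow_right₀ hL (by omega)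
  calc D^2*L^2 = L^2*D*D := by ring
    _ ≤ L^(w-1)*D*(L+D) :=
        mul_le_mul (mul_le_mul_of_nonneg_right e2 hD0.le) (by linarith) hD0.le
          (by positivity)

lemma denom_B {L D : ℝ} (hL : 1 ≤ L) (hD : 1 ≤ D) (w : ℕ) (h3 : 3 ≤ w) :
    D^2*L^2 ≤ (L+D)^w * D := by
  have hL0 : (0:ℝ) < L := lt_of_lt_of_le one_pos hL
  have hD0 : (0:ℝ) < D := lt_of_lt_of_le one_pos hD
  have hM : (1:ℝ) ≤ L + D := by linarith
  have e1 : (L+D)^3 ≤ (L+D)^w := pow_le_pow_right₀ hM h3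
  calc D^2*L^2 = (L*L*D)*D := by ring
    _ ≤ ((L+D)*(L+D)*(L+D))*D := by
        have : L*L*D ≤ (L+D)*(L+D)*(L+D) :=
          mul_le_mul (mul_le_mul (by linarith) (by linarith) hL0.le (by linarith))
            (by linarith) hD0.le (by positivity)
        exact mul_le_mul_of_nonneg_right this hD0.le
    _ = (L+D)^3*D := by ring
    _ ≤ (L+D)^w*D := mul_le_mul_of_nonneg_right e1 hD0.le

lemma summable_pnat_sq : Summable (fun k : ℕ+ => 1/((k:ℕ):ℝ)^2) := by
  have h : Summable (fun n : ℕ => 1/(n:ℝ)^2) :=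
    Real.summable_one_div_nat_pow.mpr one_lt_two
  exact h.comp_injective PNat.coe_injective

lemma summable_dom : Summable (fun q : ℕ+ × ℕ+ => 1/(((q.1:ℕ):ℝ)^2 * ((q.2:ℕ):ℝ)^2)) := by
  have := summable_pnat_sq.mul_of_nonneg summable_pnat_sq
    (fun k => by positivity) (fun k => by positivity)
  refine this.congr fun q => ?_
  rw [div_mul_div_comm, one_mul]

lemma summable_of_dom {f : ℕ+ × ℕ+ → ℝ} (h0 : ∀ q, 0 ≤ f q)
    (hle : ∀ q, f q ≤ 1/(((q.1:ℕ):ℝ)^2 * ((q.2:ℕ):ℝ)^2)) : Summable f :=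
  Summable.of_nonneg_of_le h0 hle summable_dom

def eqv : ℕ+ × ℕ+ ≃ {p : ℕ+ × ℕ+ // p.2 < p.1} where
  toFun q := ⟨(q.2 + q.1, q.2), lt_add_of_pos_right _ q.1.pos⟩
  invFun p := (p.1.1 - p.1.2, p.1.2)
  left_inv q := by
    ext
    · show q.2 + q.1 - q.2 = q.1
      rw [add_comm]; exact PNat.add_sub
    · rfl
  right_inv p := by
    apply Subtype.ext
    have : p.1.2 + (p.1.1 - p.1.2) = p.1.1 := PNat.add_sub_of_lt p.2
    exact Prod.ext this rfl

def e2 : ℕ × ℕ ≃ ℕ+ × ℕ+ :=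
  Equiv.prodCongr Equiv.pnatEquivNat.symm Equiv.pnatEquivNat.symm

lemma e2_coe1 (x : ℕ × ℕ) : (((e2 x).1 : ℕ+) : ℕ) = x.1 + 1 := rfl
lemma e2_coe2 (x : ℕ × ℕ) : (((e2 x).2 : ℕ+) : ℕ) = x.2 + 1 := rfl

lemma B_tsum (w : ℕ)
    (hBs : Summable (fun q : ℕ+ × ℕ+ => 1/((((q.2:ℕ):ℝ)+((q.1:ℕ):ℝ))^w * ((q.1:ℕ):ℝ)))) :
    ∑' q : ℕ+ × ℕ+, 1/((((q.2:ℕ):ℝ)+((q.1:ℕ):ℝ))^w * ((q.1:ℕ):ℝ))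
      = ∑' n : ℕ, harm (n+1) / ((n:ℝ)+2)^w := by
  set B : ℕ+ × ℕ+ → ℝ := fun q => 1/((((q.2:ℕ):ℝ)+((q.1:ℕ):ℝ))^w * ((q.1:ℕ):ℝ)) with hB
  set g : ℕ × ℕ → ℝ := fun x => 1/(((x.1:ℝ)+(x.2:ℝ)+2)^w * ((x.1:ℝ)+1)) with hg
  have hcomp : ∀ x : ℕ × ℕ, B (e2 x) = g x := by
    intro x
    simp only [hB, hg, e2_coe1, e2_coe2]
    push_cast
    ring_nf
  have step1 : ∑' q : ℕ+ × ℕ+, B q = ∑' x : ℕ × ℕ, g x := by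
    rw [← e2.tsum_eq B]
    exact tsum_congr hcomp
  have hgs : Summable g := by
    have := (e2.summable_iff (f := B)).mpr hBs
    exact this.congr hcomp
  have step2 : ∑' x : ℕ × ℕ, g x
      = ∑' σ : (Σ n : ℕ, Finset.HasAntidiagonal.antidiagonal n), g ((Finset.HasAntidiagonal.sigmaAntidiagonalEquivProd) σ) :=
    (Finset.HasAntidiagonal.sigmaAntidiagonalEquivProd.tsum_eq g).symm
  have hσs : Summable (fun σ : (Σ n : ℕ, Finset.HasAntidiagonal.antidiagonal n) =>
      g (Finset.HasAntidiagonal.sigmaAntidiagonalEquivProd σ)) :=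
    (Finset.HasAntidiagonal.sigmaAntidiagonalEquivProd.summable_iff).mpr hgs
  have step3 : ∑' σ : (Σ n : ℕ, Finset.HasAntidiagonal.antidiagonal n), g (Finset.HasAntidiagonal.sigmaAntidiagonalEquivProd σ)
      = ∑' n : ℕ, ∑' p : Finset.HasAntidiagonal.antidiagonal n, g p := by
    rw [hσs.tsum_sigma]
    simp only [Finset.HasAntidiagonal.sigmaAntidiagonalEquivProd_apply]
  have step4 : ∀ n : ℕ, ∑' p : Finset.HasAntidiagonal.antidiagonal n, g (p : ℕ × ℕ)
      = harm (n+1) / ((n:ℝ)+2)^w := by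
    intro n
    rw [Finset.tsum_subtype]
    rw [Finset.Nat.sum_antidiagonal_eq_sum_range_succ_mk]
    have : ∀ i ∈ Finset.range (n+1), g (i, n - i) = (1/((n:ℝ)+2)^w) * (1/((i:ℝ)+1)) := by
      intro i hi
      have hin : i ≤ n := by
        have := Finset.mem_range.mp hi; omega
      simp only [hg]
      rw [Nat.cast_sub hin]
      rw [one_div_mul_one_div]
      congr 2
      ring
    rw [Finset.sum_congr rfl this, ← Finset.mul_sum]
    rw [show ∑ i ∈ Finset.range (n+1), 1/((i:ℝ)+1) = harm (n+1) from
      Finset.sum_congr rfl fun i _ => rfl]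
    rw [one_div_mul_eq_div]
  rw [step1, step2, step3]
  exact tsum_congr step4

lemma C_hasSum_inner (w : ℕ) (hw : 1 ≤ w) (l : ℕ+) :
    HasSum (fun d : ℕ+ => 1/(((l:ℕ):ℝ)^(w-1) * ((d:ℕ):ℝ) * (((l:ℕ):ℝ)+((d:ℕ):ℝ))))
      (harm l / ((l:ℕ):ℝ)^w) := by
  have hL0 : (0:ℝ) < ((l:ℕ):ℝ) := by exact_mod_cast l.pos
  have h := (tele_pnat l).mul_left ((1:ℝ)/((l:ℕ):ℝ)^w)
  rw [one_div_mul_eq_div] at h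
  refine h.congr_fun fun d => ?_
  have hD0 : (0:ℝ) < ((d:ℕ):ℝ) := by exact_mod_cast d.pos
  have hpow : ((l:ℕ):ℝ)^w = ((l:ℕ):ℝ)^(w-1) * ((l:ℕ):ℝ) := by
    rw [← pow_succ]
    congr 1
    omega
  rw [hpow]
  have h1 : ((l:ℕ):ℝ) ≠ 0 := ne_of_gt hL0
  have h2 : ((d:ℕ):ℝ) ≠ 0 := ne_of_gt hD0
  have h3 : ((d:ℕ):ℝ) + ((l:ℕ):ℝ) ≠ 0 := by positivity
  have h4 : ((l:ℕ):ℝ) + ((d:ℕ):ℝ) ≠ 0 := by positivity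
  have h5 : ((l:ℕ):ℝ)^(w-1) ≠ 0 := pow_ne_zero _ h1
  field_simp
  ring

lemma C_tsum (w : ℕ) (hw : 3 ≤ w)
    (hCs : Summable (fun q : ℕ+ × ℕ+ =>
      1/(((q.2:ℕ):ℝ)^(w-1) * ((q.1:ℕ):ℝ) * (((q.2:ℕ):ℝ)+((q.1:ℕ):ℝ))))) :
    ∑' q : ℕ+ × ℕ+, 1/(((q.2:ℕ):ℝ)^(w-1) * ((q.1:ℕ):ℝ) * (((q.2:ℕ):ℝ)+((q.1:ℕ):ℝ)))
      = ∑' b : ℕ, harm (b+1) / ((b:ℝ)+1)^w := by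
  set C : ℕ+ × ℕ+ → ℝ := fun q =>
    1/(((q.2:ℕ):ℝ)^(w-1) * ((q.1:ℕ):ℝ) * (((q.2:ℕ):ℝ)+((q.1:ℕ):ℝ))) with hC
  have hswap : ∑' q : ℕ+ × ℕ+, C q = ∑' x : ℕ+ × ℕ+, C (x.2, x.1) := by
    exact ((Equiv.prodComm ℕ+ ℕ+).tsum_eq C).symm
  have hCs' : Summable (fun x : ℕ+ × ℕ+ => C (x.2, x.1)) :=
    ((Equiv.prodComm ℕ+ ℕ+).summable_iff (f := C)).mpr hCs
  rw [hswap, hCs'.tsum_prod]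
  have hinner : ∀ l : ℕ+, ∑' d : ℕ+, C (d, l) = harm l / ((l:ℕ):ℝ)^w := by
    intro l
    exact (C_hasSum_inner w (by omega) l).tsum_eq
  rw [tsum_congr hinner]
  rw [← Equiv.pnatEquivNat.symm.tsum_eq (fun l : ℕ+ => harm l / ((l:ℕ):ℝ)^w)]
  apply tsum_congr
  intro b
  have : ((Equiv.pnatEquivNat.symm b : ℕ+) : ℕ) = b + 1 := rfl
  rw [this]
  push_cast
  ring_nf

lemma summable_nat_aux (w : ℕ) (hw : 3 ≤ w) :
    Summable (fun b : ℕ => harm (b+1) / ((b:ℝ)+1)^w) := by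
  have base : Summable (fun b : ℕ => 1/((b:ℝ)+1)^2) := by
    have := (summable_nat_add_iff 1).mpr (Real.summable_one_div_nat_pow.mpr one_lt_two)
    exact this.congr fun b => by push_cast; ring_nf
  apply Summable.of_nonneg_of_le _ _ base
  · intro b
    exact div_nonneg (harm_nonneg _) (by positivity)
  · intro b
    have hb1 : (1:ℝ) ≤ (b:ℝ)+1 := by linarith [Nat.cast_nonneg (α := ℝ) b]
    have hb0 : (0:ℝ) < (b:ℝ)+1 := by linarith
    rw [div_le_div_iff₀ (by positivity) (by positivity)]
    have h1 : harm (b+1) ≤ (b:ℝ)+1 := by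
      have := harm_le (b+1)
      push_cast at this
      linarith
    calc harm (b+1) * ((b:ℝ)+1)^2 ≤ ((b:ℝ)+1) * ((b:ℝ)+1)^2 :=
          mul_le_mul_of_nonneg_right h1 (by positivity)
      _ = ((b:ℝ)+1)^3 := by ring
      _ ≤ ((b:ℝ)+1)^w := pow_le_pow_right₀ hb1 hw
      _ = 1 * ((b:ℝ)+1)^w := by ring

lemma summable_bb_aux (w : ℕ) (hw : 3 ≤ w) :
    Summable (fun n : ℕ => harm (n+1) / ((n:ℝ)+2)^w) := by
  have base : Summable (fun b : ℕ => 1/((b:ℝ)+1)^2) := by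
    have := (summable_nat_add_iff 1).mpr (Real.summable_one_div_nat_pow.mpr one_lt_two)
    exact this.congr fun b => by push_cast; ring_nf
  apply Summable.of_nonneg_of_le _ _ base
  · intro b
    exact div_nonneg (harm_nonneg _) (by positivity)
  · intro n
    have hb1 : (1:ℝ) ≤ (n:ℝ)+1 := by linarith [Nat.cast_nonneg (α := ℝ) n]
    have hb2 : (1:ℝ) ≤ (n:ℝ)+2 := by linarith
    rw [div_le_div_iff₀ (by positivity) (by positivity)]
    have h1 : harm (n+1) ≤ (n:ℝ)+1 := by
      have := harm_le (n+1)
      push_cast at this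
      linarith
    calc harm (n+1) * ((n:ℝ)+1)^2 ≤ (((n:ℝ)+2) * ((n:ℝ)+2)^2) := by
          have : harm (n+1) * ((n:ℝ)+1)^2 ≤ ((n:ℝ)+2) * ((n:ℝ)+2)^2 := by
            have e1 : ((n:ℝ)+1)^2 ≤ ((n:ℝ)+2)^2 := pow_le_pow_left₀ (by linarith) (by linarith) 2
            have e2 : harm (n+1) ≤ (n:ℝ)+2 := by linarith
            exact mul_le_mul e2 e1 (by positivity) (by linarith)
          linarith
      _ = ((n:ℝ)+2)^3 := by ring
      _ ≤ ((n:ℝ)+2)^w := pow_le_pow_right₀ hb2 hw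
      _ = 1 * ((n:ℝ)+2)^w := by ring

lemma summable_z_aux (w : ℕ) (hw : 3 ≤ w) :
    Summable (fun b : ℕ => 1/((b:ℝ)+1)^(w+1)) := by
  have base : Summable (fun b : ℕ => 1/((b:ℝ)+1)^2) := by
    have := (summable_nat_add_iff 1).mpr (Real.summable_one_div_nat_pow.mpr one_lt_two)
    exact this.congr fun b => by push_cast; ring_nf
  apply Summable.of_nonneg_of_le _ _ base
  · intro b; positivity
  · intro b
    have hb1 : (1:ℝ) ≤ (b:ℝ)+1 := by linarith [Nat.cast_nonneg (α := ℝ) b]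
    apply one_div_le_one_div_of_le (by positivity)
    exact pow_le_pow_right₀ hb1 (by omega)

lemma core (w : ℕ) (hw : 3 ≤ w) :
    ∑ k ∈ Finset.Icc 2 w, doubleZeta k (w+1-k) = zetaVal (w+1) := by
  classical
  -- the functions on the product
  set F : ℕ → ℕ+ × ℕ+ → ℝ := fun k q =>
    1/(((((q.2:ℕ):ℝ))+((q.1:ℕ):ℝ))^k * ((q.2:ℕ):ℝ)^(w+1-k)) with hF
  set C : ℕ+ × ℕ+ → ℝ := fun q =>
    1/(((q.2:ℕ):ℝ)^(w-1) * ((q.1:ℕ):ℝ) * (((q.2:ℕ):ℝ)+((q.1:ℕ):ℝ))) with hC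
  set B : ℕ+ × ℕ+ → ℝ := fun q =>
    1/((((q.2:ℕ):ℝ)+((q.1:ℕ):ℝ))^w * ((q.1:ℕ):ℝ)) with hB
  have hq1 : ∀ q : ℕ+ × ℕ+, (1:ℝ) ≤ ((q.1:ℕ):ℝ) := fun q => by exact_mod_cast q.1.one_le
  have hq2 : ∀ q : ℕ+ × ℕ+, (1:ℝ) ≤ ((q.2:ℕ):ℝ) := fun q => by exact_mod_cast q.2.one_le
  -- summability
  have hFs : ∀ k ∈ Finset.Icc 2 w, Summable (F k) := by
    intro k hk
    obtain ⟨hk2, hkw⟩ := Finset.mem_Icc.mp hk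
    apply summable_of_dom
    · intro q; positivity
    · intro q
      apply one_div_le_one_div_of_le
      · positivity
      · exact denom_F (hq2 q) (hq1 q) w k hw hk2 hkw
  have hCs : Summable C := by
    apply summable_of_dom
    · intro q; positivity
    · intro q
      apply one_div_le_one_div_of_le
      · positivity
      · exact denom_C (hq2 q) (hq1 q) w hw
  have hBs : Summable B := by
    apply summable_of_dom
    · intro q; positivity
    · intro q
      apply one_div_le_one_div_of_le
      · positivity
      · exact denom_B (hq2 q) (hq1 q) w hw
  -- each doubleZeta as a tsum over the product
  have hdz : ∀ k ∈ Finset.Icc 2 w, doubleZeta k (w+1-k) = ∑' q : ℕ+ × ℕ+, F k q := by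
    intro k _
    rw [doubleZeta, ← eqv.tsum_eq]
    apply tsum_congr
    intro q
    simp only [hF, eqv, Equiv.coe_fn_mk]
    push_cast
    ring_nf
  rw [Finset.sum_congr rfl hdz, ← Summable.tsum_finsetSum hFs]
  -- pointwise geometric identity
  have hpt : ∀ q : ℕ+ × ℕ+, ∑ k ∈ Finset.Icc 2 w, F k q = C q - B q := by
    intro q
    have hL0 : (0:ℝ) < ((q.2:ℕ):ℝ) := by exact_mod_cast q.2.pos
    have hD0 : (0:ℝ) < ((q.1:ℕ):ℝ) := by exact_mod_cast q.1.pos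
    rw [show ∑ k ∈ Finset.Icc 2 w, F k q
        = ∑ k ∈ Finset.Icc 2 w,
          1/((((q.2:ℕ):ℝ)+((q.1:ℕ):ℝ))^k * ((q.2:ℕ):ℝ)^(w+1-k)) from rfl]
    rw [geom_id w (by omega) _ _ hL0 hD0]
    simp only [hC, hB]
    set L := ((q.2:ℕ):ℝ)
    set D := ((q.1:ℕ):ℝ)
    have h1 : L ≠ 0 := ne_of_gt hL0
    have h2 : D ≠ 0 := ne_of_gt hD0
    have h3 : L + D ≠ 0 := by positivity
    have hpow : L^w = L^(w-1) * L := by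
      rw [← pow_succ]; congr 1; omega
    rw [hpow]
    have h5 : L^(w-1) ≠ 0 := pow_ne_zero _ h1
    have h6 : (L+D)^w ≠ 0 := pow_ne_zero _ h3
    field_simp
    ring
  rw [tsum_congr hpt]
  -- split the tsum
  have hsplit : ∑' q : ℕ+ × ℕ+, (C q - B q) = (∑' q, C q) - ∑' q, B q := hCs.tsum_sub hBs
  rw [hsplit, C_tsum w hw hCs, B_tsum w hBs]
  -- final computation over ℕ
  set a : ℕ → ℝ := fun b => harm (b+1) / ((b:ℝ)+1)^w with ha
  set bb : ℕ → ℝ := fun n => harm (n+1) / ((n:ℝ)+2)^w with hbb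
  set z : ℕ → ℝ := fun b => 1/((b:ℝ)+1)^(w+1) with hz
  have hza : zetaVal (w+1) = ∑' b : ℕ, z b := by
    rw [zetaVal, ← Equiv.pnatEquivNat.symm.tsum_eq (fun k : ℕ+ => (1:ℝ)/(k:ℝ)^(w+1))]
    apply tsum_congr
    intro b
    simp only [hz]
    have : ((Equiv.pnatEquivNat.symm b : ℕ+) : ℕ) = b + 1 := rfl
    show (1:ℝ) / (((Equiv.pnatEquivNat.symm b : ℕ+) : ℕ) : ℝ)^(w+1) = _
    rw [this]
    push_cast
    ring_nf
  rw [hza]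
  have has : Summable a := summable_nat_aux w hw
  have hbbs : Summable bb := summable_bb_aux w hw
  have hzs : Summable z := summable_z_aux w hw
  have has' : Summable (fun b => a (b+1)) := (summable_nat_add_iff 1).mpr has
  have hzs' : Summable (fun b => z (b+1)) := (summable_nat_add_iff 1).mpr hzs
  rw [has.tsum_eq_zero_add, hzs.tsum_eq_zero_add]
  have h0a : a 0 = 1 := by simp [ha, harm_one]
  have h0z : z 0 = 1 := by simp [hz]
  rw [h0a, h0z]
  have key : ∑' b : ℕ, a (b+1) - ∑' n : ℕ, bb n = ∑' b : ℕ, z (b+1) := by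
    rw [← has'.tsum_sub hbbs]
    apply tsum_congr
    intro b
    simp only [ha, hbb, hz]
    have hcast : ((b+1:ℕ):ℝ) = (b:ℝ)+1 := by push_cast; ring
    rw [hcast]
    have hh : harm (b+1+1) = harm (b+1) + 1/((b:ℝ)+2) := by
      rw [harm_succ]
      push_cast
      ring_nf
    rw [hh]
    have hb2 : (0:ℝ) < (b:ℝ)+2 := by positivity
    have h6 : ((b:ℝ)+2)^w ≠ 0 := by positivity
    rw [show (b:ℝ)+1+1 = (b:ℝ)+2 by ring, pow_succ]
    field_simp
    ring
  linarith [key]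

end EulerSumAux

theorem euler_sum (n : ℕ) (hn : 2 ≤ n) :
    ∑ k ∈ Finset.Icc 2 (2 * n - 1), doubleZeta k (2 * n - k) = zetaVal (2 * n) := by
  have hw : 3 ≤ 2*n - 1 := by omega
  have h1 : 2*n = (2*n-1) + 1 := by omega
  have hcong : ∀ k ∈ Finset.Icc 2 (2*n-1), doubleZeta k (2*n - k)
      = doubleZeta k ((2*n-1)+1-k) := by
    intro k hk
    congr 1
    omega
  rw [Finset.sum_congr rfl hcong, EulerSumAux.core (2*n-1) hw, ← h1]
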